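/- There is a universal constant c > 0 with the following property. Let ξ₁, ξ₂ ∈ ℝ³ \ {0} with ξ₀ = ξ₁ + ξ₂ ≠ 0, let τ₁, τ₂ ∈ ℝ and τ₀ = τ₁ + τ₂, let s₀, s₁, s₂ ∈ {+1, −1} be signs, and set 𝔥_j = −τ_j + s_j|ξ_j| for j = 0, 1, 2 and θ₁₂ = ∠(s₁ξ₁, s₂ξ₂). Then max(|𝔥₀|, |𝔥₁|, |𝔥₂|) ≥ c·min(|ξ₁|, |ξ₂|)·θ₁₂². Moreover, if s₁ ≠ s₂, then also max(|𝔥₀|, |𝔥₁|, |𝔥₂|) ≥ c·|ξ₁||ξ₂|·θ₁₂²/|ξ₀|. -/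

import Mathlib

open scoped InnerProductSpace

noncomputable section

abbrev E3 : Type := EuclideanSpace ℝ (Fin 3)

private lemma abs_sub_sub_le_three_max (a b c : ℝ) :
    |a - b - c| ≤ 3 * max |a| (max |b| |c|) := by
  have h1 : |a| ≤ max |a| (max |b| |c|) := le_max_left _ _
  have h2 : |b| ≤ max |a| (max |b| |c|) := le_trans (le_max_left _ _) (le_max_right _ _)
  have h3 : |c| ≤ max |a| (max |b| |c|) := le_trans (le_max_right _ _) (le_max_right _ _)
  calc |a - b - c| ≤ |a - b| + |c| := abs_sub _ _
    _ ≤ |a| + |b| + |c| := by have := abs_sub a b; linarith [abs_sub a b]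
    _ ≤ 3 * max |a| (max |b| |c|) := by linarith

private lemma quad_lower (θ : ℝ) (h0 : 0 ≤ θ) (hπ : θ ≤ Real.pi) :
    θ ^ 2 / 5 ≤ 1 - Real.cos θ := by
  have h := Real.cos_le_one_sub_mul_cos_sq (x := θ) (by rwa [abs_of_nonneg h0])
  have hpi2 : Real.pi ^ 2 ≤ 10 := by nlinarith [Real.pi_lt_d2]
  have hpos : (0:ℝ) < Real.pi ^ 2 := by positivity
  have : θ ^ 2 / 5 ≤ 2 / Real.pi ^ 2 * θ ^ 2 := by
    rw [div_mul_eq_mul_div, div_le_div_iff₀ (by norm_num) hpos]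
    nlinarith [sq_nonneg θ]
  linarith

set_option maxHeartbeats 2000000 in
/-- Lower bounds on the hyperbolic weights in a bilinear interaction in terms of the
interaction angle (Lemma I:Lemma1, estimates (I:10) and (I:16)). -/
theorem hyperbolic_weights_angle_bound :
    ∃ c > (0 : ℝ),
      ∀ (ξ₁ ξ₂ : E3), ξ₁ ≠ 0 → ξ₂ ≠ 0 → ξ₁ + ξ₂ ≠ 0 →
      ∀ (τ₁ τ₂ : ℝ),
      ∀ (s₀ s₁ s₂ : ℝ), (s₀ = 1 ∨ s₀ = -1) → (s₁ = 1 ∨ s₁ = -1) → (s₂ = 1 ∨ s₂ = -1) →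
      (max (|(-(τ₁ + τ₂)) + s₀ * ‖ξ₁ + ξ₂‖|)
          (max (|(-τ₁) + s₁ * ‖ξ₁‖|) (|(-τ₂) + s₂ * ‖ξ₂‖|))
        ≥ c * min ‖ξ₁‖ ‖ξ₂‖ * (InnerProductGeometry.angle (s₁ • ξ₁) (s₂ • ξ₂)) ^ 2)
      ∧ (s₁ ≠ s₂ →
        max (|(-(τ₁ + τ₂)) + s₀ * ‖ξ₁ + ξ₂‖|)
            (max (|(-τ₁) + s₁ * ‖ξ₁‖|) (|(-τ₂) + s₂ * ‖ξ₂‖|))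
          ≥ c * (‖ξ₁‖ * ‖ξ₂‖ * (InnerProductGeometry.angle (s₁ • ξ₁) (s₂ • ξ₂)) ^ 2
              / ‖ξ₁ + ξ₂‖)) := by
  refine ⟨1/30, by norm_num, ?_⟩
  intro ξ₁ ξ₂ hξ1 hξ2 hξ0 τ₁ τ₂ s₀ s₁ s₂ hs₀ hs₁ hs₂
  set N0 : ℝ := ‖ξ₁ + ξ₂‖ with hN0def
  set N1 : ℝ := ‖ξ₁‖ with hN1def
  set N2 : ℝ := ‖ξ₂‖ with hN2def
  set θ : ℝ := InnerProductGeometry.angle (s₁ • ξ₁) (s₂ • ξ₂) with hθdef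
  set M : ℝ := max (|(-(τ₁ + τ₂)) + s₀ * N0|)
      (max (|(-τ₁) + s₁ * N1|) (|(-τ₂) + s₂ * N2|)) with hMdef
  have hN0 : 0 < N0 := norm_pos_iff.mpr hξ0
  have hN1 : 0 < N1 := norm_pos_iff.mpr hξ1
  have hN2 : 0 < N2 := norm_pos_iff.mpr hξ2
  have habs1 : |s₁| = 1 := by rcases hs₁ with h | h <;> simp [h]
  have habs2 : |s₂| = 1 := by rcases hs₂ with h | h <;> simp [h]
  have habs0 : |s₀| = 1 := by rcases hs₀ with h | h <;> simp [h]
  have hnu : ‖s₁ • ξ₁‖ = N1 := by rw [norm_smul, Real.norm_eq_abs, habs1, one_mul]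
  have hnv : ‖s₂ • ξ₂‖ = N2 := by rw [norm_smul, Real.norm_eq_abs, habs2, one_mul]
  -- inner product in terms of the angle
  have hcos : ⟪s₁ • ξ₁, s₂ • ξ₂⟫_ℝ = N1 * N2 * Real.cos θ := by
    rw [InnerProductGeometry.cos_angle, hnu, hnv]
    field_simp
  have hinner : ⟪s₁ • ξ₁, s₂ • ξ₂⟫_ℝ = s₁ * s₂ * ⟪ξ₁, ξ₂⟫_ℝ := by
    rw [real_inner_smul_left, real_inner_smul_right]; ring
  have hθ0 : 0 ≤ θ := InnerProductGeometry.angle_nonneg _ _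
  have hθπ : θ ≤ Real.pi := InnerProductGeometry.angle_le_pi _ _
  have hq := quad_lower θ hθ0 hθπ
  have hcos1 : Real.cos θ ≤ 1 := Real.cos_le_one θ
  -- norm of the sum
  have hsq : N0 ^ 2 = N1 ^ 2 + 2 * ⟪ξ₁, ξ₂⟫_ℝ + N2 ^ 2 := norm_add_sq_real ξ₁ ξ₂
  -- max bound
  have hM0 : 0 ≤ M := le_trans (abs_nonneg _) (le_max_left _ _)
  have hK : |s₀ * N0 - s₁ * N1 - s₂ * N2| ≤ 3 * M := by
    have := abs_sub_sub_le_three_max ((-(τ₁ + τ₂)) + s₀ * N0) ((-τ₁) + s₁ * N1)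
      ((-τ₂) + s₂ * N2)
    calc |s₀ * N0 - s₁ * N1 - s₂ * N2|
        = |((-(τ₁ + τ₂)) + s₀ * N0) - ((-τ₁) + s₁ * N1) - ((-τ₂) + s₂ * N2)| := by
          ring_nf
      _ ≤ 3 * M := this
  have hK' : |N0 - abs (s₁ * N1 + s₂ * N2)| ≤ 3 * M := by
    have h1 : abs (s₀ * N0) = N0 := by
      rw [abs_mul, habs0, one_mul, abs_of_pos hN0]
    calc |N0 - abs (s₁ * N1 + s₂ * N2)| = |abs (s₀ * N0) - abs (s₁ * N1 + s₂ * N2)| := by rw [h1]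
      _ ≤ |s₀ * N0 - (s₁ * N1 + s₂ * N2)| := abs_abs_sub_abs_le_abs_sub _ _
      _ = |s₀ * N0 - s₁ * N1 - s₂ * N2| := by ring_nf
      _ ≤ 3 * M := hK
  have htri : N0 ≤ N1 + N2 := norm_add_le _ _
  set m : ℝ := min N1 N2 with hmdef
  have hm1 : m ≤ N1 := min_le_left _ _
  have hm2 : m ≤ N2 := min_le_right _ _
  have hm0 : 0 < m := lt_min hN1 hN2
  by_cases hss : s₁ = s₂
  · -- equal signs
    have hs1s2 : s₁ * s₂ = 1 := by
      rw [← hss]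
      rcases hs₁ with h | h <;> rw [h] <;> norm_num
    have hip : ⟪ξ₁, ξ₂⟫_ℝ = N1 * N2 * Real.cos θ := by
      rw [← hcos, hinner, hs1s2, one_mul]
    have habsB : abs (s₁ * N1 + s₂ * N2) = N1 + N2 := by
      rcases hs₁ with h | h
      · have h2 : s₂ = 1 := by rw [← hss]; exact h
        rw [h, h2, one_mul, one_mul, abs_of_pos (by linarith)]
      · have h2 : s₂ = -1 := by rw [← hss]; exact h
        rw [h, h2, show (-1:ℝ) * N1 + (-1) * N2 = -(N1 + N2) by ring, abs_neg,
          abs_of_pos (by linarith)]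
    rw [habsB] at hK'
    have hdiff : N1 + N2 - N0 ≤ 3 * M := by
      have := abs_le.mp hK'
      linarith [this.1]
    have hkey : m * θ ^ 2 ≤ 30 * M := by
      nlinarith [mul_le_mul_of_nonneg_left hdiff (by linarith : (0:ℝ) ≤ N1 + N2 + N0),
        mul_le_mul_of_nonneg_left hq (by positivity : (0:ℝ) ≤ N1 * N2),
        mul_pos hN1 hN2, sq_nonneg (N1 - N2), sq_nonneg θ,
        mul_le_mul_of_nonneg_right hm1 (le_of_lt hN2),
        mul_le_mul_of_nonneg_right hm2 (le_of_lt hN1)]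
    constructor
    · rw [ge_iff_le]
      calc (1/30 : ℝ) * m * θ ^ 2 = (m * θ ^ 2) / 30 := by ring
        _ ≤ M := by linarith
    · intro h; exact absurd hss h
  · -- opposite signs
    have hs1s2 : s₁ * s₂ = -1 := by
      rcases hs₁ with h | h <;> rcases hs₂ with h' | h'
      · exact absurd (h.trans h'.symm) hss
      · rw [h, h']; norm_num
      · rw [h, h']; norm_num
      · exact absurd (h.trans h'.symm) hss
    have hip : ⟪ξ₁, ξ₂⟫_ℝ = -(N1 * N2 * Real.cos θ) := by
      have := hinner
      rw [hcos, hs1s2] at this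
      linarith
    have habsB : abs (s₁ * N1 + s₂ * N2) = |N1 - N2| := by
      rcases hs₁ with h | h
      · have h' : s₂ = -1 := hs₂.resolve_left fun h'' => hss (h.trans h''.symm)
        rw [h, h']; ring_nf
      · have h' : s₂ = 1 := hs₂.resolve_right fun h'' => hss (h.trans h''.symm)
        rw [h, h', show (-1:ℝ) * N1 + 1 * N2 = -(N1 - N2) by ring, abs_neg]
    rw [habsB] at hK'
    have htri2 : |N1 - N2| ≤ N0 := by
      have h := abs_norm_sub_norm_le ξ₁ (-ξ₂)
      rwa [norm_neg, sub_neg_eq_add] at h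
    have hdiff : N0 - |N1 - N2| ≤ 3 * M := by
      have := abs_le.mp hK'
      linarith [this.2]
    have habssq : |N1 - N2| ^ 2 = (N1 - N2) ^ 2 := sq_abs _
    have habsnn : 0 ≤ |N1 - N2| := abs_nonneg _
    -- N0^2 - (N1-N2)^2 = 2 N1 N2 (1 - cos θ)
    have hkey : N1 * N2 * θ ^ 2 ≤ 15 * M * N0 := by
      nlinarith [mul_le_mul_of_nonneg_left hdiff (by linarith : (0:ℝ) ≤ N0 + |N1 - N2|),
        mul_le_mul_of_nonneg_left hq (by positivity : (0:ℝ) ≤ N1 * N2),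
        mul_pos hN1 hN2, sq_nonneg θ]
    constructor
    · rw [ge_iff_le]
      have hm' : m * N0 ≤ 2 * (N1 * N2) := by
        nlinarith [mul_le_mul_of_nonneg_left htri (le_of_lt hm0),
          mul_le_mul_of_nonneg_right hm1 (le_of_lt hN2),
          mul_le_mul_of_nonneg_right hm2 (le_of_lt hN1)]
      -- m θ² ≤ 2 N1 N2 θ² / N0 ≤ 30 M
      have : m * θ ^ 2 * N0 ≤ 30 * M * N0 := by
        nlinarith [mul_le_mul_of_nonneg_right hm' (sq_nonneg θ)]
      have h30 : m * θ ^ 2 ≤ 30 * M := le_of_mul_le_mul_right (by linarith) hN0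
      calc (1/30 : ℝ) * m * θ ^ 2 = (m * θ ^ 2) / 30 := by ring
        _ ≤ M := by linarith
    · intro _
      rw [ge_iff_le]
      have heq : (1/30:ℝ) * (N1 * N2 * θ ^ 2 / N0) = (N1 * N2 * θ ^ 2 / 30) / N0 := by
        ring
      rw [heq, div_le_iff₀ hN0]
      nlinarith [mul_nonneg hM0 (le_of_lt hN0)]
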